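/- arXiv:2311.08366 — 3 statements merged into one kernel-verified Lean document; each statement's English description precedes it below -/
import Mathlib

section
/- Let 1 ≤ p < 2. There exists a constant C > 0, depending only on p, such that for every ℓ > 0 and all continuously differentiable paths x, y : [0,1] → ℝ^d with |x|_{p;[0,1]} ≤ ℓ and |y|_{p;[0,1]} ≤ ℓ, and all 0 ≤ s < t ≤ 1, the level-two iterated integrals S₂(x)_{s,t}, defined entrywise by S₂(x)^{i,j}_{s,t} := ∫_s^t (x^i(r) − x^i(s))·(x^j)′(r) dr, satisfy ‖S₂(x)_{s,t} − S₂(y)_{s,t}‖ ≤ C·ℓ·|x − y|_{p;[s,t]}, where the norm on d×d matrices is the Frobenius norm. -/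
open scoped ENNReal

/-- The `p`-th power of the 1D `p`-variation of `x : ℝ → E` over `[s,s']`:
the supremum, over all finite monotone partitions `s = r₀ ≤ r₁ ≤ ... ≤ r_k = s'`, of
`∑ᵢ ‖x(rᵢ₊₁) − x(rᵢ)‖^p`, valued in `ℝ≥0∞`. -/
noncomputable def oneVarPow {E : Type*} [NormedAddCommGroup E]
    (p : ℝ) (x : ℝ → E) (s s' : ℝ) : ℝ≥0∞ :=
  ⨆ (k : ℕ) (r : Fin (k + 1) → ℝ) (_ : Monotone r) (_ : r 0 = s) (_ : r (Fin.last k) = s'),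
    ∑ i : Fin k, (‖x (r i.succ) - x (r i.castSucc)‖₊ : ℝ≥0∞) ^ p

/-- The 1D `p`-variation `|x|_{p;[s,s']}`, i.e. the `1/p`-th power of `oneVarPow`. -/
noncomputable def oneVar {E : Type*} [NormedAddCommGroup E]
    (p : ℝ) (x : ℝ → E) (s s' : ℝ) : ℝ≥0∞ :=
  oneVarPow p x s s' ^ (1 / p)

/-- The level-two iterated integral `S₂(x)_{s,t}` of a `C¹` path `x`, viewed as a `d×d`
array: `S₂(x)^{i,j}_{s,t} = ∫ₛᵗ (xⁱ(r) − xⁱ(s))·(xʲ)′(r) dr`. -/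
noncomputable def levelTwo (d : ℕ) (x : ℝ → EuclideanSpace ℝ (Fin d))
    (s t : ℝ) : Fin d → Fin d → ℝ :=
  fun i j => ∫ r in s..t, (x r i - x s i) * deriv (fun u => x u j) r

/-- The Frobenius norm of a `d×d` real array. -/
noncomputable def frobNorm (d : ℕ) (M : Fin d → Fin d → ℝ) : ℝ :=
  Real.sqrt (∑ i, ∑ j, M i j ^ 2)


open Finset

lemma tele_ineq (q : ℝ) (hq1 : 1 < q) (hq2 : q ≤ 2) (n : ℕ) (hn : 1 ≤ n) :
    ((n : ℝ) + 1) ^ (-q) ≤ (1 / (q - 1)) * ((n : ℝ) ^ (1 - q) - ((n : ℝ) + 1) ^ (1 - q)) := by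
  set b : ℝ := (n : ℝ) + 1 with hbdef
  have hb : 2 ≤ b := by
    have : (1 : ℝ) ≤ (n : ℝ) := by exact_mod_cast hn
    simp [hbdef]; linarith
  have hb0 : 0 < b := by linarith
  set e : ℝ := q - 1 with hedef
  have he0 : 0 < e := by simp [hedef]; linarith
  have he1 : e ≤ 1 := by simp [hedef]; linarith
  have heb : e / b < 1 := by
    rw [div_lt_one hb0]; linarith
  have hA0 : (0:ℝ) < 1 - 1/b := by
    have : 1/b ≤ 1/2 := by
      apply div_le_div_of_nonneg_left <;> linarith
    linarith
  -- Bernoulli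
  have hbern : (1 - 1/b) ^ e ≤ 1 - e/b := by
    have := rpow_one_add_le_one_add_mul_self (s := -(1/b)) (by
      have : 1/b ≤ 1 := by rw [div_le_one hb0]; linarith
      linarith) he0.le he1
    have h1 : (1 + -(1/b)) = 1 - 1/b := by ring
    have h2 : 1 + e * -(1/b) = 1 - e/b := by ring
    rw [h1, h2] at this; exact this
  have hAe0 : (0:ℝ) < (1 - 1/b) ^ e := Real.rpow_pos_of_pos hA0 e
  have h1eb : (0:ℝ) < 1 - e/b := by linarith
  -- key : (b-1)^(-e) ≥ b^(-e) + e * b^(-q)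
  have hbm1 : b - 1 = b * (1 - 1/b) := by field_simp
  have hinv : (1 - 1/b) ^ (-e) ≥ 1 + e/b := by
    rw [Real.rpow_neg hA0.le]
    rw [ge_iff_le, le_inv_comm₀ (by positivity) hAe0]
    calc (1 + e/b)⁻¹ ≥ (1 - e/b * (e/b)) * (1 + e/b)⁻¹ := by
          apply mul_le_of_le_one_left (by positivity)
          nlinarith [div_pos he0 hb0]
      _ = 1 - e/b := by
          have : (1:ℝ) + e/b ≠ 0 := by positivity
          field_simp
          ring
      _ ≥ (1 - 1/b) ^ e := hbern
  have hkey : (b - 1) ^ (-e) ≥ b ^ (-e) + e * b ^ (-q) := by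
    have h1 : (b - 1) ^ (-e) = b ^ (-e) * (1 - 1/b) ^ (-e) := by
      rw [hbm1, Real.mul_rpow hb0.le hA0.le]
    have h2 : b ^ (-q) = b ^ (-e) * b⁻¹ := by
      rw [← Real.rpow_neg_one b, ← Real.rpow_add hb0]
      congr 1
      simp [hedef]; ring
    rw [h1, h2]
    have hbe0 : (0:ℝ) < b ^ (-e) := Real.rpow_pos_of_pos hb0 _
    calc b ^ (-e) * (1 - 1/b) ^ (-e) ≥ b ^ (-e) * (1 + e/b) := by
          apply mul_le_mul_of_nonneg_left hinv hbe0.le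
      _ = b ^ (-e) + e * (b ^ (-e) * b⁻¹) := by ring
  -- conclude
  have hn1 : (n : ℝ) = b - 1 := by simp [hbdef]
  have h1q : (1 : ℝ) - q = -e := by rw [hedef]; ring
  rw [hn1, h1q]
  rw [ge_iff_le, ← sub_nonneg] at hkey
  rw [one_div, inv_mul_eq_div, le_div_iff₀ he0]
  nlinarith [hkey]

lemma psum_le (q : ℝ) (hq1 : 1 < q) (hq2 : q ≤ 2) (n : ℕ) :
    ∑ i ∈ Finset.range n, ((i : ℝ) + 1) ^ (-q) ≤ 1 + 1 / (q - 1) := by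
  have hq0 : (0:ℝ) < q - 1 := by linarith
  have main : ∀ n : ℕ, 1 ≤ n → ∑ i ∈ Finset.range n, ((i : ℝ) + 1) ^ (-q)
      ≤ 1 + (1 / (q - 1)) * (1 - (n : ℝ) ^ (1 - q)) := by
    intro n hn
    induction n with
    | zero => omega
    | succ m ih =>
      rcases Nat.eq_or_lt_of_le hn with h | h
      · -- m = 0
        have hm : m = 0 := by omega
        subst hm
        simp [Real.one_rpow]
      · have hm1 : 1 ≤ m := by omega
        rw [Finset.sum_range_succ]
        have h2 := tele_ineq q hq1 hq2 m hm1
        have h3 := ih hm1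
        push_cast
        push_cast at h3 h2
        linarith
  rcases Nat.eq_zero_or_pos n with rfl | hn
  · simp; positivity
  · calc _ ≤ 1 + (1 / (q - 1)) * (1 - (n : ℝ) ^ (1 - q)) := main n hn
      _ ≤ 1 + 1 / (q - 1) := by
        have h1 : (0:ℝ) ≤ (n : ℝ) ^ (1 - q) := Real.rpow_nonneg (by positivity) _
        have h2 : (0:ℝ) < 1 / (q-1) := by positivity
        nlinarith

noncomputable def toE2 (d : ℕ) (M : Fin d → Fin d → ℝ) :
    EuclideanSpace ℝ (Fin d × Fin d) := WithLp.toLp 2 (fun q => M q.1 q.2)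

lemma frobNorm_eq_norm (d : ℕ) (M : Fin d → Fin d → ℝ) :
    frobNorm d M = ‖toE2 d M‖ := by
  rw [frobNorm, EuclideanSpace.norm_eq]
  congr 1
  simp [Fintype.sum_prod_type, toE2, Real.norm_eq_abs, sq_abs]

noncomputable def outer2 (d : ℕ) (a b : EuclideanSpace ℝ (Fin d)) :
    EuclideanSpace ℝ (Fin d × Fin d) := WithLp.toLp 2 (fun q => a q.1 * b q.2)

lemma norm_outer2 (d : ℕ) (a b : EuclideanSpace ℝ (Fin d)) :
    ‖outer2 d a b‖ = ‖a‖ * ‖b‖ := by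
  rw [EuclideanSpace.norm_eq, EuclideanSpace.norm_eq, EuclideanSpace.norm_eq,
    ← Real.sqrt_mul (by positivity)]
  congr 1
  rw [Fintype.sum_prod_type, Finset.sum_mul_sum]
  apply Finset.sum_congr rfl
  intro i _
  apply Finset.sum_congr rfl
  intro j _
  simp [outer2, Real.norm_eq_abs, abs_mul, mul_pow]

lemma norm_le_of_entries (d : ℕ) (v : EuclideanSpace ℝ (Fin d × Fin d)) (c : ℝ)
    (hc : 0 ≤ c) (h : ∀ q, |v q| ≤ c) : ‖v‖ ≤ (d : ℝ) * c := by
  rw [EuclideanSpace.norm_eq]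
  have : ∑ q : Fin d × Fin d, ‖v q‖ ^ 2 ≤ ∑ _q : Fin d × Fin d, c ^ 2 := by
    apply Finset.sum_le_sum
    intro q _
    have := h q
    rw [Real.norm_eq_abs]
    nlinarith [abs_nonneg (v q)]
  calc Real.sqrt (∑ q : Fin d × Fin d, ‖v q‖ ^ 2) ≤ Real.sqrt (∑ _q : Fin d × Fin d, c ^ 2) :=
        Real.sqrt_le_sqrt this
    _ = (d : ℝ) * c := by
        rw [Finset.sum_const]
        simp only [Finset.card_univ, Fintype.card_prod, Fintype.card_fin, nsmul_eq_mul, smul_eq_mul]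
        rw [show ((d * d : ℕ) : ℝ) * c ^ 2 = ((d : ℝ) * c) ^ 2 by push_cast; ring,
          Real.sqrt_sq (by positivity)]

/-- Riemann-Stieltjes sum of the matrix-valued "outer product" integrand. -/
noncomputable def RS (d : ℕ) (f g : ℝ → EuclideanSpace ℝ (Fin d)) (r : ℕ → ℝ) (k : ℕ) :
    EuclideanSpace ℝ (Fin d × Fin d) :=
  ∑ i ∈ Finset.range k, outer2 d (f (r i)) (g (r (i + 1)) - g (r i))

/-- `K` bounds the `p`-variation of `f` over partitions inside `[s,t]`. -/
def VB (p : ℝ) (d : ℕ) (f : ℝ → EuclideanSpace ℝ (Fin d)) (s t K : ℝ) : Prop :=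
  ∀ (k : ℕ) (r : ℕ → ℝ), (∀ i j, i ≤ j → j ≤ k → r i ≤ r j) →
    (∀ i, i ≤ k → r i ∈ Set.Icc s t) →
    ∑ i ∈ Finset.range k, ‖f (r (i + 1)) - f (r i)‖ ^ p ≤ K ^ p

lemma sum_remove {M : Type*} [AddCommGroup M] (T T' : ℕ → M) (k m : ℕ) (hm : m + 2 ≤ k)
    (h1 : ∀ i, i < m → T' i = T i) (h2 : ∀ i, m < i → i < k - 1 → T' i = T (i + 1)) :
    ∑ i ∈ Finset.range k, T i
      = ∑ i ∈ Finset.range (k - 1), T' i + (T m + T (m + 1) - T' m) := by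
  have e1 : ∑ i ∈ Finset.range k, T i
      = ∑ i ∈ Finset.range m, T i + T m + T (m + 1) + ∑ i ∈ Finset.Ico (m + 2) k, T i := by
    rw [Finset.range_eq_Ico, ← Finset.sum_Ico_consecutive T (Nat.zero_le (m + 2)) hm,
      ← Finset.range_eq_Ico]
    rw [Finset.sum_range_succ, Finset.sum_range_succ]
  have e2 : ∑ i ∈ Finset.range (k - 1), T' i
      = ∑ i ∈ Finset.range m, T' i + T' m + ∑ i ∈ Finset.Ico (m + 1) (k - 1), T' i := by
    rw [Finset.range_eq_Ico, ← Finset.sum_Ico_consecutive T' (Nat.zero_le (m + 1))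
      (by omega : m + 1 ≤ k - 1), ← Finset.range_eq_Ico]
    rw [Finset.sum_range_succ]
  have e3 : ∑ i ∈ Finset.range m, T' i = ∑ i ∈ Finset.range m, T i :=
    Finset.sum_congr rfl fun i hi => h1 i (Finset.mem_range.mp hi)
  have e4 : ∑ i ∈ Finset.Ico (m + 1) (k - 1), T' i = ∑ i ∈ Finset.Ico (m + 2) k, T i := by
    rw [Finset.sum_Ico_eq_sum_range, Finset.sum_Ico_eq_sum_range]
    have hc : k - 1 - (m + 1) = k - (m + 2) := by omega
    rw [hc]
    apply Finset.sum_congr rfl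
    intro i hi
    have hik : i < k - (m + 2) := Finset.mem_range.mp hi
    rw [h2 (m + 1 + i) (by omega) (by omega)]
    congr 1
    omega
  rw [e1, e2, e3, e4]
  abel

lemma RS_remove (d : ℕ) (f g : ℝ → EuclideanSpace ℝ (Fin d)) (r : ℕ → ℝ) (k m : ℕ)
    (hm : m + 2 ≤ k) :
    RS d f g r k
      = RS d f g (fun j => if j ≤ m then r j else r (j + 1)) (k - 1)
        + outer2 d (f (r (m + 1)) - f (r m)) (g (r (m + 2)) - g (r (m + 1))) := by
  set r' : ℕ → ℝ := fun j => if j ≤ m then r j else r (j + 1) with hr'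
  have key := sum_remove (fun i => outer2 d (f (r i)) (g (r (i + 1)) - g (r i)))
    (fun i => outer2 d (f (r' i)) (g (r' (i + 1)) - g (r' i))) k m hm
    (by
      intro i hi
      have h1 : r' i = r i := by simp only [hr']; rw [if_pos (by omega)]
      have h2 : r' (i + 1) = r (i + 1) := by simp only [hr']; rw [if_pos (by omega)]
      simp only [h1, h2])
    (by
      intro i hi1 hi2
      have h1 : r' i = r (i + 1) := by simp only [hr']; rw [if_neg (by omega)]
      have h2 : r' (i + 1) = r (i + 2) := by simp only [hr']; rw [if_neg (by omega)]
      simp only [h1, h2])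
  have hm' : r' m = r m := by simp only [hr']; rw [if_pos le_rfl]
  have hm1 : r' (m + 1) = r (m + 2) := by simp only [hr']; rw [if_neg (by omega)]
  rw [RS, key]
  congr 1
  ext q
  simp only [outer2, hm', hm1, PiLp.add_apply, PiLp.sub_apply, PiLp.toLp_apply]
  ring

lemma young_discrete (p : ℝ) (hp1 : 1 ≤ p) (hp2 : p < 2) (d : ℕ)
    (f g : ℝ → EuclideanSpace ℝ (Fin d)) (s t : ℝ) (Kf Kg : ℝ) (hKf : 0 ≤ Kf) (hKg : 0 ≤ Kg)
    (hVf : VB p d f s t Kf) (hVg : VB p d g s t Kg) :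
    ∀ (k : ℕ) (r : ℕ → ℝ), (∀ i j, i ≤ j → j ≤ k → r i ≤ r j) →
      (∀ i, i ≤ k → r i ∈ Set.Icc s t) → r 0 = s → r k = t →
      ‖RS d f g r k - outer2 d (f s) (g t - g s)‖
        ≤ Kf * Kg * ∑ i ∈ Finset.range (k - 1), ((i : ℝ) + 1) ^ (-(2 / p)) := by
  have hp0 : (0:ℝ) < p := by linarith
  intro k
  induction k using Nat.strong_induction_on with
  | _ k IH =>
    intro r hmono hmem h0 hk
    match k, hk, hmono, hmem, IH with
    | 0, hk, hmono, hmem, IH =>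
      have hst : s = t := h0 ▸ hk ▸ rfl
      have : outer2 d (f s) (g t - g s) = 0 := by
        ext q
        simp [outer2, hst]
      simp [RS, this]
    | 1, hk, hmono, hmem, IH =>
      have : RS d f g r 1 = outer2 d (f s) (g t - g s) := by
        rw [RS, Finset.sum_range_one]
        norm_num [h0, hk]
      simp [this]
    | (n + 2), hk, hmono, hmem, IH =>
      set k := n + 2 with hkdef
      set A : ℕ → ℝ := fun i => ‖f (r (i + 1)) - f (r i)‖ ^ p with hA
      set B : ℕ → ℝ := fun i => ‖g (r (i + 2)) - g (r (i + 1))‖ ^ p with hB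
      have hAnn : ∀ i, 0 ≤ A i := fun i => Real.rpow_nonneg (norm_nonneg _) _
      have hBnn : ∀ i, 0 ≤ B i := fun i => Real.rpow_nonneg (norm_nonneg _) _
      have hAsum : ∑ i ∈ Finset.range (n + 1), A i ≤ Kf ^ p :=
        hVf (n + 1) r (fun i j hij hj => hmono i j hij (by omega))
          (fun i hi => hmem i (by omega))
      have hBsum : ∑ i ∈ Finset.range (n + 1), B i ≤ Kg ^ p :=
        hVg (n + 1) (fun i => r (i + 1)) (fun i j hij hj => hmono _ _ (by omega) (by omega))
          (fun i hi => hmem _ (by omega))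
      obtain ⟨m, hmmem, hmin⟩ := Finset.exists_min_image (Finset.range (n + 1))
        (fun i => A i * B i) ⟨0, by simp⟩
      have hmn : m ≤ n := by
        have := Finset.mem_range.mp hmmem; omega
      -- Cauchy-Schwarz pigeonhole
      have hlow : ((n : ℝ) + 1) * Real.sqrt (A m * B m)
          ≤ ∑ i ∈ Finset.range (n + 1), Real.sqrt (A i) * Real.sqrt (B i) := by
        have := Finset.card_nsmul_le_sum (Finset.range (n + 1))
          (fun i => Real.sqrt (A i) * Real.sqrt (B i)) (Real.sqrt (A m * B m))
          (fun i hi => by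
            show Real.sqrt (A m * B m) ≤ Real.sqrt (A i) * Real.sqrt (B i)
            rw [← Real.sqrt_mul (hAnn i)]
            exact Real.sqrt_le_sqrt (hmin i hi))
        rw [Finset.card_range, nsmul_eq_mul] at this
        push_cast at this ⊢
        linarith
      have hCS : (∑ i ∈ Finset.range (n + 1), Real.sqrt (A i) * Real.sqrt (B i)) ^ 2
          ≤ Kf ^ p * Kg ^ p := by
        calc (∑ i ∈ Finset.range (n + 1), Real.sqrt (A i) * Real.sqrt (B i)) ^ 2
            ≤ (∑ i ∈ Finset.range (n + 1), Real.sqrt (A i) ^ 2)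
              * ∑ i ∈ Finset.range (n + 1), Real.sqrt (B i) ^ 2 :=
              Finset.sum_mul_sq_le_sq_mul_sq _ _ _
          _ = (∑ i ∈ Finset.range (n + 1), A i) * ∑ i ∈ Finset.range (n + 1), B i := by
              rw [Finset.sum_congr rfl (fun i _ => Real.sq_sqrt (hAnn i)),
                Finset.sum_congr rfl (fun i _ => Real.sq_sqrt (hBnn i))]
          _ ≤ Kf ^ p * Kg ^ p := by
              apply mul_le_mul hAsum hBsum (Finset.sum_nonneg fun i _ => hBnn i)
              exact Real.rpow_nonneg hKf p
      have hprod : ((n : ℝ) + 1) ^ (2:ℕ) * (A m * B m) ≤ Kf ^ p * Kg ^ p := by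
        have h1 : (((n : ℝ) + 1) * Real.sqrt (A m * B m)) ^ 2 ≤ Kf ^ p * Kg ^ p := by
          have hnn : 0 ≤ ((n : ℝ) + 1) * Real.sqrt (A m * B m) := by positivity
          calc (((n : ℝ) + 1) * Real.sqrt (A m * B m)) ^ 2
              ≤ (∑ i ∈ Finset.range (n + 1), Real.sqrt (A i) * Real.sqrt (B i)) ^ 2 := by
                apply pow_le_pow_left₀ hnn hlow
            _ ≤ _ := hCS
        rw [mul_pow, Real.sq_sqrt (mul_nonneg (hAnn m) (hBnn m))] at h1
        exact h1
      -- the removed increment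
      have hstep : ‖f (r (m + 1)) - f (r m)‖ * ‖g (r (m + 2)) - g (r (m + 1))‖
          ≤ Kf * Kg * ((n : ℝ) + 1) ^ (-(2 / p)) := by
        have hn1 : (0:ℝ) < (n : ℝ) + 1 := by positivity
        have hAmBm : A m * B m ≤ (Kf * Kg) ^ p * (((n : ℝ) + 1) ^ (2:ℕ))⁻¹ := by
          rw [Real.mul_rpow hKf hKg]
          have h2 : (0:ℝ) < ((n : ℝ) + 1) ^ (2:ℕ) := by positivity
          calc A m * B m
              = (((n : ℝ) + 1) ^ (2:ℕ) * (A m * B m)) * (((n : ℝ) + 1) ^ (2:ℕ))⁻¹ := by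
                field_simp
            _ ≤ (Kf ^ p * Kg ^ p) * (((n : ℝ) + 1) ^ (2:ℕ))⁻¹ :=
                mul_le_mul_of_nonneg_right hprod (inv_nonneg.2 h2.le)
        have hLHS : ‖f (r (m + 1)) - f (r m)‖ * ‖g (r (m + 2)) - g (r (m + 1))‖
            = (A m * B m) ^ (1 / p) := by
          rw [Real.mul_rpow (hAnn m) (hBnn m), hA, hB]
          rw [one_div, Real.rpow_rpow_inv (norm_nonneg _) (ne_of_gt hp0),
            Real.rpow_rpow_inv (norm_nonneg _) (ne_of_gt hp0)]
        rw [hLHS]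
        calc (A m * B m) ^ (1 / p)
            ≤ ((Kf * Kg) ^ p * (((n : ℝ) + 1) ^ (2:ℕ))⁻¹) ^ (1 / p) := by
              apply Real.rpow_le_rpow (mul_nonneg (hAnn m) (hBnn m)) hAmBm (by positivity)
          _ = Kf * Kg * ((n : ℝ) + 1) ^ (-(2 / p)) := by
              rw [Real.mul_rpow (by positivity) (by positivity)]
              congr 1
              · rw [one_div, Real.rpow_rpow_inv (mul_nonneg hKf hKg) (ne_of_gt hp0)]
              · rw [← Real.rpow_natCast ((n:ℝ) + 1) 2, ← Real.rpow_neg hn1.le,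
                  ← Real.rpow_mul hn1.le]
                congr 1
                push_cast
                field_simp
        done
      -- removal
      set r' : ℕ → ℝ := fun j => if j ≤ m then r j else r (j + 1) with hr'
      have hrem := RS_remove d f g r k m (by omega)
      have hmono' : ∀ i j, i ≤ j → j ≤ n + 1 → r' i ≤ r' j := by
        intro i j hij hj
        simp only [hr']
        by_cases h1 : i ≤ m <;> by_cases h2 : j ≤ m <;>
          simp only [if_pos, if_neg, h1, h2, if_true, if_false] <;>
          first
            | exact hmono i j hij (by omega)
            | exact hmono i (j + 1) (by omega) (by omega)
            | exact hmono (i + 1) (j + 1) (by omega) (by omega)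
            | omega
      have hmem' : ∀ i, i ≤ n + 1 → r' i ∈ Set.Icc s t := by
        intro i hi
        simp only [hr']
        by_cases h1 : i ≤ m
        · rw [if_pos h1]; exact hmem i (by omega)
        · rw [if_neg h1]; exact hmem (i + 1) (by omega)
      have h0' : r' 0 = s := by simp only [hr']; rw [if_pos (by omega)]; exact h0
      have hk' : r' (n + 1) = t := by
        simp only [hr']; rw [if_neg (by omega)]; exact hk
      have hIH := IH (n + 1) (by omega) r' hmono' hmem' h0' hk'
      have hksub : k - 1 = n + 1 := by omega
      rw [hksub] at hrem
      calc ‖RS d f g r k - outer2 d (f s) (g t - g s)‖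
          = ‖(RS d f g r' (n + 1) - outer2 d (f s) (g t - g s))
              + outer2 d (f (r (m + 1)) - f (r m)) (g (r (m + 2)) - g (r (m + 1)))‖ := by
            rw [hrem]; congr 1; abel
        _ ≤ ‖RS d f g r' (n + 1) - outer2 d (f s) (g t - g s)‖
              + ‖outer2 d (f (r (m + 1)) - f (r m)) (g (r (m + 2)) - g (r (m + 1)))‖ :=
            norm_add_le _ _
        _ ≤ Kf * Kg * ∑ i ∈ Finset.range n, ((i : ℝ) + 1) ^ (-(2 / p))
              + Kf * Kg * ((n : ℝ) + 1) ^ (-(2 / p)) := by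
            apply add_le_add
            · simpa using hIH
            · rw [norm_outer2]; exact hstep
        _ = Kf * Kg * ∑ i ∈ Finset.range (k - 1), ((i : ℝ) + 1) ^ (-(2 / p)) := by
            rw [hksub, Finset.sum_range_succ]
            push_cast
            ring

open MeasureTheory

lemma coord_abs_le_norm (d : ℕ) (v : EuclideanSpace ℝ (Fin d)) (i : Fin d) : |v i| ≤ ‖v‖ := by
  rw [EuclideanSpace.norm_eq, ← Real.sqrt_sq_eq_abs]
  apply Real.sqrt_le_sqrt
  have : (v i) ^ 2 = ‖v i‖ ^ 2 := by simp [Real.norm_eq_abs, sq_abs]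
  rw [this]
  exact Finset.single_le_sum (f := fun j => ‖v j‖ ^ 2) (fun j _ => by positivity)
    (Finset.mem_univ i)

/-- The matrix of integrals `∫ fⁱ (gʲ)'`. -/
noncomputable def IM (d : ℕ) (f g : ℝ → EuclideanSpace ℝ (Fin d)) (s t : ℝ) :
    Fin d → Fin d → ℝ :=
  fun i j => ∫ u in s..t, (f u i) * deriv (fun v => g v j) u

lemma young_integral (p : ℝ) (hp1 : 1 ≤ p) (hp2 : p < 2) (d : ℕ)
    (f g : ℝ → EuclideanSpace ℝ (Fin d)) (s t : ℝ) (hst : s ≤ t)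
    (hf : Continuous f)
    (hgder : ∀ j : Fin d, Continuous (deriv (fun u => g u j)))
    (hgd : ∀ (j : Fin d) (u : ℝ), DifferentiableAt ℝ (fun v => g v j) u)
    (Kf Kg : ℝ) (hKf : 0 ≤ Kf) (hKg : 0 ≤ Kg)
    (hVf : VB p d f s t Kf) (hVg : VB p d g s t Kg) :
    ‖toE2 d (IM d f g s t) - outer2 d (f s) (g t - g s)‖
      ≤ (1 + 1 / (2 / p - 1)) * (Kf * Kg) := by
  have hp0 : (0:ℝ) < p := by linarith
  have hq1 : (1:ℝ) < 2 / p := by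
    rw [lt_div_iff₀ hp0]; linarith
  have hq2 : (2:ℝ) / p ≤ 2 := by
    rw [div_le_iff₀ hp0]; nlinarith
  have hfi : ∀ i : Fin d, Continuous fun r => f r i := fun i => by fun_prop
  set G : Fin d → ℝ → ℝ := fun j => deriv (fun v => g v j) with hG
  -- total variation budget for the derivative integrals
  set L : Fin d → ℝ := fun j => ∫ u in s..t, |G j u| with hL
  have hLnn : ∀ j, 0 ≤ L j := fun j => by
    rw [hL]
    apply intervalIntegral.integral_nonneg hst
    intro u _; positivity
  set LL : ℝ := ∑ j, L j with hLL
  have hLLnn : 0 ≤ LL := Finset.sum_nonneg fun j _ => hLnn j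
  have hLj_le : ∀ j, L j ≤ LL := fun j =>
    Finset.single_le_sum (f := L) (fun j _ => hLnn j) (Finset.mem_univ j)
  apply le_of_forall_pos_le_add
  intro ε hε
  -- uniform continuity
  have hUC : UniformContinuousOn f (Set.Icc s t) :=
    (isCompact_Icc).uniformContinuousOn_of_continuous hf.continuousOn
  set ε' : ℝ := ε / ((d : ℝ) * LL + 1) with hε'
  have hε'pos : 0 < ε' := by
    apply div_pos hε
    positivity
  rw [Metric.uniformContinuousOn_iff] at hUC
  obtain ⟨δ, hδ, hδf⟩ := hUC ε' hε'pos
  -- choose n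
  obtain ⟨n₀, hn₀⟩ := exists_nat_gt ((t - s) / δ)
  set n : ℕ := n₀ + 1 with hn
  have hnpos : 0 < n := Nat.succ_pos _
  have hnR : (0:ℝ) < n := by exact_mod_cast hnpos
  have hmesh : (t - s) / n < δ := by
    rw [div_lt_iff₀ hnR]
    have h2 : t - s < (n₀ : ℝ) * δ := (div_lt_iff₀ hδ).mp hn₀
    have h3 : ((n₀ : ℝ)) * δ ≤ (n : ℝ) * δ := by
      apply mul_le_mul_of_nonneg_right _ hδ.le
      exact_mod_cast Nat.le_succ n₀
    linarith
  set r : ℕ → ℝ := fun i => s + (i : ℝ) * ((t - s) / n) with hr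
  have hts : 0 ≤ t - s := by linarith
  have hrmono : ∀ i j : ℕ, i ≤ j → r i ≤ r j := by
    intro i j hij
    simp only [hr]
    have : (i:ℝ) ≤ (j:ℝ) := by exact_mod_cast hij
    have h2 : (0:ℝ) ≤ (t - s) / n := by positivity
    nlinarith
  have hrn : r n = t := by
    simp only [hr]
    field_simp
    ring
  have hr0 : r 0 = s := by simp [hr]
  have hrmem : ∀ i : ℕ, i ≤ n → r i ∈ Set.Icc s t := by
    intro i hi
    constructor
    · rw [← hr0]; exact hrmono 0 i (Nat.zero_le i)
    · rw [← hrn]; exact hrmono i n hi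
  have hrstep : ∀ m : ℕ, r (m + 1) - r m = (t - s) / n := by
    intro m; simp only [hr]; push_cast; ring
  -- integrability facts
  have hint : ∀ (i j : Fin d) (a b : ℝ),
      IntervalIntegrable (fun u => f u i * G j u) volume a b := by
    intro i j a b
    apply Continuous.intervalIntegrable
    exact (hfi i).mul (hgder j)
  have hint2 : ∀ (c : ℝ) (j : Fin d) (a b : ℝ),
      IntervalIntegrable (fun u => c * G j u) volume a b := by
    intro c j a b
    apply Continuous.intervalIntegrable
    exact continuous_const.mul (hgder j)
  have hintG : ∀ (j : Fin d) (a b : ℝ), IntervalIntegrable (G j) volume a b := by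
    intro j a b
    exact (hgder j).intervalIntegrable a b
  -- entrywise estimate between integral and Riemann sum
  have hentry : ∀ q : Fin d × Fin d,
      |toE2 d (IM d f g s t) q - RS d f g r n q| ≤ ε' * LL := by
    intro q
    obtain ⟨i, j⟩ := q
    have hIM : toE2 d (IM d f g s t) (i, j)
        = ∑ m ∈ Finset.range n, ∫ u in r m..r (m + 1), f u i * G j u := by
      show IM d f g s t i j = _
      rw [IM]
      rw [intervalIntegral.sum_integral_adjacent_intervals (fun m _ => hint i j _ _), hr0, hrn]
    have hRS : RS d f g r n (i, j)
        = ∑ m ∈ Finset.range n, ∫ u in r m..r (m + 1), f (r m) i * G j u := by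
      rw [RS, WithLp.ofLp_sum, Finset.sum_apply]
      apply Finset.sum_congr rfl
      intro m _
      have hftc : ∫ u in r m..r (m + 1), G j u = g (r (m + 1)) j - g (r m) j := by
        rw [hG]
        exact intervalIntegral.integral_deriv_eq_sub (fun u _ => hgd j u) (hintG j _ _)
      rw [intervalIntegral.integral_const_mul]
      show outer2 d (f (r m)) (g (r (m + 1)) - g (r m)) (i, j) = _
      rw [outer2]
      show f (r m) i * (g (r (m + 1)) - g (r m)) j = _
      rw [hftc]
      simp [PiLp.sub_apply]
    rw [hIM, hRS, ← Finset.sum_sub_distrib]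
    have hterm : ∀ m ∈ Finset.range n,
        |(∫ u in r m..r (m + 1), f u i * G j u) - ∫ u in r m..r (m + 1), f (r m) i * G j u|
          ≤ ε' * ∫ u in r m..r (m + 1), |G j u| := by
      intro m hm
      have hmle : r m ≤ r (m + 1) := hrmono m (m + 1) (Nat.le_succ m)
      have hmn : m + 1 ≤ n := Finset.mem_range.mp hm
      rw [← intervalIntegral.integral_sub (hint i j _ _) (hint2 (f (r m) i) j _ _)]
      calc |∫ u in r m..r (m + 1), (f u i * G j u - f (r m) i * G j u)|
          ≤ ∫ u in r m..r (m + 1), |f u i * G j u - f (r m) i * G j u| :=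
            intervalIntegral.abs_integral_le_integral_abs hmle
        _ ≤ ∫ u in r m..r (m + 1), ε' * |G j u| := by
            apply intervalIntegral.integral_mono_on hmle
            · apply Continuous.intervalIntegrable
              have : Continuous fun u => f u i * G j u - f (r m) i * G j u :=
                ((hfi i).mul (hgder j)).sub (continuous_const.mul (hgder j))
              exact this.abs
            · apply Continuous.intervalIntegrable
              exact continuous_const.mul (hgder j).abs
            · intro u hu
              have h1 : f u i * G j u - f (r m) i * G j u = (f u i - f (r m) i) * G j u := by
                ring
              rw [h1, abs_mul]
              apply mul_le_mul_of_nonneg_right _ (abs_nonneg _)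
              have humem : u ∈ Set.Icc s t := by
                constructor
                · exact le_trans (hrmem m (by omega)).1 hu.1
                · exact le_trans hu.2 (hrmem (m + 1) hmn).2
              have hrmem' : r m ∈ Set.Icc s t := hrmem m (by omega)
              have hdist : dist u (r m) < δ := by
                rw [Real.dist_eq, abs_of_nonneg (by linarith [hu.1])]
                calc u - r m ≤ r (m + 1) - r m := by linarith [hu.2]
                  _ = (t - s) / n := hrstep m
                  _ < δ := hmesh
              have := hδf u humem (r m) hrmem' hdist
              rw [dist_eq_norm] at this
              calc |f u i - f (r m) i| = |(f u - f (r m)) i| := by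
                    simp [PiLp.sub_apply]
                _ ≤ ‖f u - f (r m)‖ := coord_abs_le_norm d _ i
                _ ≤ ε' := this.le
        _ = ε' * ∫ u in r m..r (m + 1), |G j u| := intervalIntegral.integral_const_mul _ _
      done
    calc |∑ m ∈ Finset.range n,
          ((∫ u in r m..r (m + 1), f u i * G j u) - ∫ u in r m..r (m + 1), f (r m) i * G j u)|
        ≤ ∑ m ∈ Finset.range n,
          |(∫ u in r m..r (m + 1), f u i * G j u) - ∫ u in r m..r (m + 1), f (r m) i * G j u| :=
          Finset.abs_sum_le_sum_abs _ _
      _ ≤ ∑ m ∈ Finset.range n, ε' * ∫ u in r m..r (m + 1), |G j u| :=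
          Finset.sum_le_sum hterm
      _ = ε' * ∑ m ∈ Finset.range n, ∫ u in r m..r (m + 1), |G j u| := by
          rw [Finset.mul_sum]
      _ = ε' * L j := by
          rw [hL]
          congr 1
          rw [intervalIntegral.sum_integral_adjacent_intervals
            (fun m _ => ((hgder j).abs.intervalIntegrable _ _)), hr0, hrn]
      _ ≤ ε' * LL := by
          apply mul_le_mul_of_nonneg_left (hLj_le j) hε'pos.le
  -- put together
  have hnorm1 : ‖toE2 d (IM d f g s t) - RS d f g r n‖ ≤ (d : ℝ) * (ε' * LL) := by
    apply norm_le_of_entries d _ _ (by positivity)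
    intro q
    have := hentry q
    simpa [PiLp.sub_apply] using this
  have hyoung := young_discrete p hp1 hp2 d f g s t Kf Kg hKf hKg hVf hVg n r
    (fun i j hij hj => hrmono i j hij) hrmem hr0 hrn
  have hsum := psum_le (2 / p) hq1 hq2 (n - 1)
  have hyoung2 : ‖RS d f g r n - outer2 d (f s) (g t - g s)‖
      ≤ (1 + 1 / (2 / p - 1)) * (Kf * Kg) := by
    calc ‖RS d f g r n - outer2 d (f s) (g t - g s)‖
        ≤ Kf * Kg * ∑ i ∈ Finset.range (n - 1), ((i : ℝ) + 1) ^ (-(2 / p)) := hyoung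
      _ ≤ Kf * Kg * (1 + 1 / (2 / p - 1)) := by
          apply mul_le_mul_of_nonneg_left hsum (by positivity)
      _ = (1 + 1 / (2 / p - 1)) * (Kf * Kg) := by ring
  calc ‖toE2 d (IM d f g s t) - outer2 d (f s) (g t - g s)‖
      ≤ ‖toE2 d (IM d f g s t) - RS d f g r n‖ + ‖RS d f g r n - outer2 d (f s) (g t - g s)‖ := by
        have : toE2 d (IM d f g s t) - outer2 d (f s) (g t - g s)
            = (toE2 d (IM d f g s t) - RS d f g r n)
              + (RS d f g r n - outer2 d (f s) (g t - g s)) := by abel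
        rw [this]
        exact norm_add_le _ _
    _ ≤ (d : ℝ) * (ε' * LL) + (1 + 1 / (2 / p - 1)) * (Kf * Kg) :=
        add_le_add hnorm1 hyoung2
    _ ≤ (1 + 1 / (2 / p - 1)) * (Kf * Kg) + ε := by
        have : (d : ℝ) * (ε' * LL) ≤ ε := by
          rw [hε']
          have h0 : (0:ℝ) < (d : ℝ) * LL + 1 := by positivity
          rw [show (d : ℝ) * (ε / ((d : ℝ) * LL + 1) * LL)
              = (d : ℝ) * (ε * LL) / ((d : ℝ) * LL + 1) by ring, div_le_iff₀ h0]
          nlinarith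
        linarith

section Bridge

variable {F : Type*} [NormedAddCommGroup F]

lemma sum_le_oneVarPow (p : ℝ) (hp0 : 0 < p) (x : ℝ → F) (a b : ℝ) (hab : a ≤ b)
    (k : ℕ) (r : ℕ → ℝ)
    (hmono : ∀ i j, i ≤ j → j ≤ k → r i ≤ r j)
    (hmem : ∀ i, i ≤ k → r i ∈ Set.Icc a b) :
    ENNReal.ofReal (∑ i ∈ Finset.range k, ‖x (r (i + 1)) - x (r i)‖ ^ p)
      ≤ oneVarPow p x a b := by
  classical
  set rh : ℕ → ℝ := fun j => if j = 0 then a else if k + 1 + 1 ≤ j then b else r (j - 1)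
    with hrh
  have hrhm : ∀ u v : ℕ, u ≤ v → v ≤ k + 1 + 1 → rh u ≤ rh v := by
    intro u v huv hv
    simp only [hrh]
    by_cases hu0 : u = 0
    · rw [if_pos hu0]
      by_cases hv0 : v = 0
      · rw [if_pos hv0]
      · rw [if_neg hv0]
        by_cases hvk : k + 1 + 1 ≤ v
        · rw [if_pos hvk]; exact hab
        · rw [if_neg hvk]; exact (hmem (v - 1) (by omega)).1
    · rw [if_neg hu0]
      by_cases huk : k + 1 + 1 ≤ u
      · rw [if_pos huk, if_neg (by omega : ¬ v = 0), if_pos (by omega)]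
      · rw [if_neg huk]
        by_cases hvk : k + 1 + 1 ≤ v
        · rw [if_neg (by omega : ¬ v = 0), if_pos hvk]
          exact (hmem (u - 1) (by omega)).2
        · rw [if_neg (by omega : ¬ v = 0), if_neg hvk]
          exact hmono (u - 1) (v - 1) (by omega) (by omega)
  set R : Fin (k + 1 + 1 + 1) → ℝ := fun j => rh j.val with hR
  have hRmono : Monotone R := by
    intro i j hij
    exact hrhm i.val j.val hij (by omega)
  have hR0 : R 0 = a := by simp [hR, hrh]
  have hRlast : R (Fin.last (k + 1 + 1)) = b := by
    simp only [hR, Fin.val_last, hrh]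
    rw [if_neg (by omega), if_pos (by omega)]
  set term : ℕ → ℝ≥0∞ := fun i => (‖x (rh (i + 1)) - x (rh i)‖₊ : ℝ≥0∞) ^ p with hterm
  have hfin : (∑ i : Fin (k + 1 + 1), (‖x (R i.succ) - x (R i.castSucc)‖₊ : ℝ≥0∞) ^ p)
      = ∑ i ∈ Finset.range (k + 1 + 1), term i := by
    rw [← Fin.sum_univ_eq_sum_range term (k + 1 + 1)]
    apply Finset.sum_congr rfl
    intro i _
    simp [hR, hterm, Fin.val_succ, Fin.coe_castSucc]
  have hsup : (∑ i ∈ Finset.range (k + 1 + 1), term i) ≤ oneVarPow p x a b := by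
    rw [oneVarPow]
    apply le_iSup_of_le (k + 1 + 1)
    apply le_iSup_of_le R
    apply le_iSup_of_le hRmono
    apply le_iSup_of_le hR0
    apply le_iSup_of_le hRlast
    rw [hfin]
  have hmid : ∀ i, i < k + 1 → rh (i + 1) = r i := by
    intro i hi
    simp only [hrh]
    rw [if_neg (by omega), if_neg (by omega)]
    congr 1
  have hpeel : ∑ i ∈ Finset.range k, term (i + 1)
      ≤ ∑ i ∈ Finset.range (k + 1 + 1), term i := by
    rw [Finset.sum_range_succ' term (k + 1), Finset.sum_range_succ (fun i => term (i + 1)) k]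
    calc ∑ i ∈ Finset.range k, term (i + 1)
        ≤ (∑ i ∈ Finset.range k, term (i + 1)) + term (k + 1) := le_self_add
      _ ≤ (∑ i ∈ Finset.range k, term (i + 1)) + term (k + 1) + term 0 := le_self_add
  have hofreal : ENNReal.ofReal (∑ i ∈ Finset.range k, ‖x (r (i + 1)) - x (r i)‖ ^ p)
      = ∑ i ∈ Finset.range k, term (i + 1) := by
    rw [ENNReal.ofReal_sum_of_nonneg (fun i _ => by positivity)]
    apply Finset.sum_congr rfl
    intro i hi
    have hik := Finset.mem_range.mp hi
    have h1 : rh (i + 1) = r i := hmid i (by omega)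
    have h2 : rh (i + 1 + 1) = r (i + 1) := hmid (i + 1) (by omega)
    rw [hterm]
    show ENNReal.ofReal (‖x (r (i + 1)) - x (r i)‖ ^ p)
      = (‖x (rh (i + 1 + 1)) - x (rh (i + 1))‖₊ : ℝ≥0∞) ^ p
    rw [h1, h2, ← show ∀ v : F, ENNReal.ofReal ‖v‖ = (‖v‖₊ : ℝ≥0∞) from fun v => ofReal_norm v,
      ← ENNReal.ofReal_rpow_of_nonneg (norm_nonneg _) hp0.le]
  rw [hofreal]
  exact le_trans hpeel hsup

lemma oneVarPow_eq_rpow (p : ℝ) (hp0 : 0 < p) (x : ℝ → F) (a b : ℝ) :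
    oneVarPow p x a b = (oneVar p x a b) ^ p := by
  rw [oneVar, ← ENNReal.rpow_mul, one_div, inv_mul_cancel₀ (ne_of_gt hp0), ENNReal.rpow_one]

end Bridge

lemma VB_of_oneVar (p : ℝ) (hp0 : 0 < p) (d : ℕ) (f : ℝ → EuclideanSpace ℝ (Fin d))
    (a b s t K : ℝ) (hab : a ≤ b) (hK : 0 ≤ K) (hsub : Set.Icc s t ⊆ Set.Icc a b)
    (h : oneVar p f a b ≤ ENNReal.ofReal K) : VB p d f s t K := by
  intro k r hmono hmem
  have h1 := sum_le_oneVarPow p hp0 f a b hab k r hmono fun i hi => hsub (hmem i hi)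
  have h2 : oneVarPow p f a b ≤ ENNReal.ofReal (K ^ p) := by
    rw [oneVarPow_eq_rpow p hp0, ← ENNReal.ofReal_rpow_of_nonneg hK hp0.le]
    exact ENNReal.rpow_le_rpow h hp0.le
  have h3 := le_trans h1 h2
  rwa [ENNReal.ofReal_le_ofReal_iff (by positivity)] at h3

lemma VB_of_oneVar_toReal (p : ℝ) (hp0 : 0 < p) (d : ℕ) (f : ℝ → EuclideanSpace ℝ (Fin d))
    (s t : ℝ) (hst : s ≤ t) (hV : oneVar p f s t ≠ ⊤) :
    VB p d f s t ((oneVar p f s t).toReal) := by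
  intro k r hmono hmem
  have h1 := sum_le_oneVarPow p hp0 f s t hst k r hmono hmem
  rw [oneVarPow_eq_rpow p hp0] at h1
  have hfin : (oneVar p f s t) ^ p ≠ ⊤ := ENNReal.rpow_ne_top_of_nonneg hp0.le hV
  rw [ENNReal.ofReal_le_iff_le_toReal hfin] at h1
  calc ∑ i ∈ Finset.range k, ‖f (r (i + 1)) - f (r i)‖ ^ p
      ≤ ((oneVar p f s t) ^ p).toReal := h1
    _ = (oneVar p f s t).toReal ^ p := (ENNReal.toReal_rpow _ _).symm


/-- For `1 ≤ p < 2` there is a constant `C > 0`, depending only on `p`,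
such that for every `ℓ > 0`, all `C¹` paths `x, y : [0,1] → ℝ^d` of `p`-variation at most
`ℓ`, and all `0 ≤ s < t ≤ 1`, the level-two iterated integrals satisfy
`‖S₂(x)_{s,t} − S₂(y)_{s,t}‖_F ≤ C·ℓ·|x − y|_{p;[s,t]}`. -/
theorem levelTwo_local_lipschitz
    (p : ℝ) (hp1 : 1 ≤ p) (hp2 : p < 2) :
    ∃ C : ℝ, 0 < C ∧
      ∀ (d : ℕ) (ℓ : ℝ), 0 < ℓ →
        ∀ x y : ℝ → EuclideanSpace ℝ (Fin d),
          ContDiff ℝ 1 x → ContDiff ℝ 1 y →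
          oneVar p x 0 1 ≤ ENNReal.ofReal ℓ → oneVar p y 0 1 ≤ ENNReal.ofReal ℓ →
          ∀ s t : ℝ, 0 ≤ s → s < t → t ≤ 1 →
            ENNReal.ofReal
                (frobNorm d (fun i j => levelTwo d x s t i j - levelTwo d y s t i j)) ≤
              ENNReal.ofReal (C * ℓ) * oneVar p (fun r => x r - y r) s t := by
  have hp0 : (0:ℝ) < p := by linarith
  have hq : (0:ℝ) < 2 / p - 1 := by
    rw [sub_pos, lt_div_iff₀ hp0]; linarith
  set C0 : ℝ := 1 + 1 / (2 / p - 1) with hC0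
  have hC0pos : 0 < C0 := by positivity
  refine ⟨2 * C0, by positivity, ?_⟩
  intro d ℓ hℓ x y hx hy hvx hvy s t hs hst ht
  set Δ : ℝ → EuclideanSpace ℝ (Fin d) := fun r => x r - y r with hΔ
  have hxc : Continuous x := hx.continuous
  have hyc : Continuous y := hy.continuous
  have hcoord : ∀ (z : ℝ → EuclideanSpace ℝ (Fin d)), ContDiff ℝ 1 z → ∀ j : Fin d,
      ContDiff ℝ 1 (fun u => z u j) := by
    intro z hz j
    exact (EuclideanSpace.proj j).contDiff.comp hz
  have hxj := fun j => hcoord x hx j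
  have hyj := fun j => hcoord y hy j
  have hxd : ∀ (j : Fin d) (u : ℝ), DifferentiableAt ℝ (fun v => x v j) u :=
    fun j u => ((hxj j).differentiable one_ne_zero).differentiableAt
  have hyd : ∀ (j : Fin d) (u : ℝ), DifferentiableAt ℝ (fun v => y v j) u :=
    fun j u => ((hyj j).differentiable one_ne_zero).differentiableAt
  have hΔj : ∀ j : Fin d, (fun u => Δ u j) = fun u => x u j - y u j := by
    intro j; funext u; simp [hΔ]
  have hΔd : ∀ (j : Fin d) (u : ℝ), DifferentiableAt ℝ (fun v => Δ v j) u := by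
    intro j u
    rw [hΔj j]
    exact (hxd j u).sub (hyd j u)
  have hderΔ : ∀ j : Fin d, deriv (fun u => Δ u j)
      = fun u => deriv (fun v => x v j) u - deriv (fun v => y v j) u := by
    intro j
    funext u
    rw [hΔj j]
    exact deriv_sub (hxd j u) (hyd j u)
  have hGx : ∀ j : Fin d, Continuous (deriv (fun u => x u j)) :=
    fun j => (hxj j).continuous_deriv le_rfl
  have hGy : ∀ j : Fin d, Continuous (deriv (fun u => y u j)) :=
    fun j => (hyj j).continuous_deriv le_rfl
  have hGΔ : ∀ j : Fin d, Continuous (deriv (fun u => Δ u j)) := by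
    intro j
    rw [hderΔ j]
    exact (hGx j).sub (hGy j)
  have hΔcont : Continuous Δ := (hx.continuous).sub (hy.continuous)
  have hVx : VB p d x s t ℓ := VB_of_oneVar p hp0 d x 0 1 s t ℓ (by norm_num) hℓ.le
    (Set.Icc_subset_Icc hs ht) hvx
  have hVy : VB p d y s t ℓ := VB_of_oneVar p hp0 d y 0 1 s t ℓ (by norm_num) hℓ.le
    (Set.Icc_subset_Icc hs ht) hvy
  by_cases hVtop : oneVar p Δ s t = ⊤
  · rw [hVtop, ENNReal.mul_top (by
      simp only [ne_eq, ENNReal.ofReal_eq_zero, not_le]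
      positivity)]
    exact le_top
  · set K : ℝ := (oneVar p Δ s t).toReal with hK
    have hKnn : 0 ≤ K := ENNReal.toReal_nonneg
    have hVΔ : VB p d Δ s t K := VB_of_oneVar_toReal p hp0 d Δ s t hst.le hVtop
    have hY1 := young_integral p hp1 hp2 d Δ x s t hst.le hΔcont hGx hxd K ℓ hKnn hℓ.le hVΔ hVx
    have hY2 := young_integral p hp1 hp2 d y Δ s t hst.le hy.continuous hGΔ hΔd ℓ K hℓ.le hKnn
      hVy hVΔ
    -- entrywise identity
    have key : ∀ i j : Fin d,
        levelTwo d x s t i j - levelTwo d y s t i j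
          = (IM d Δ x s t i j - (Δ s i) * ((x t - x s) j))
            + (IM d y Δ s t i j - (y s i) * ((Δ t - Δ s) j)) := by
      intro i j
      have hix : Continuous fun u => x u i := by fun_prop
      have hiy : Continuous fun u => y u i := by fun_prop
      have hintxx : IntervalIntegrable (fun u => x u i * deriv (fun v => x v j) u)
          volume s t := (hix.mul (hGx j)).intervalIntegrable _ _
      have hintyx : IntervalIntegrable (fun u => y u i * deriv (fun v => x v j) u)
          volume s t := (hiy.mul (hGx j)).intervalIntegrable _ _
      have hintyy : IntervalIntegrable (fun u => y u i * deriv (fun v => y v j) u)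
          volume s t := (hiy.mul (hGy j)).intervalIntegrable _ _
      have hintcx : IntervalIntegrable (fun u => x s i * deriv (fun v => x v j) u)
          volume s t := (continuous_const.mul (hGx j)).intervalIntegrable _ _
      have hintcy : IntervalIntegrable (fun u => y s i * deriv (fun v => y v j) u)
          volume s t := (continuous_const.mul (hGy j)).intervalIntegrable _ _
      have hFTCx : ∫ u in s..t, deriv (fun v => x v j) u = x t j - x s j :=
        intervalIntegral.integral_deriv_eq_sub (fun u _ => hxd j u)
          ((hGx j).intervalIntegrable _ _)
      have hFTCy : ∫ u in s..t, deriv (fun v => y v j) u = y t j - y s j :=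
        intervalIntegral.integral_deriv_eq_sub (fun u _ => hyd j u)
          ((hGy j).intervalIntegrable _ _)
      have h1 : levelTwo d x s t i j
          = (∫ u in s..t, x u i * deriv (fun v => x v j) u) - x s i * (x t j - x s j) := by
        rw [levelTwo]
        simp only [sub_mul]
        rw [intervalIntegral.integral_sub hintxx hintcx,
          intervalIntegral.integral_const_mul, hFTCx]
      have h2 : levelTwo d y s t i j
          = (∫ u in s..t, y u i * deriv (fun v => y v j) u) - y s i * (y t j - y s j) := by
        rw [levelTwo]
        simp only [sub_mul]
        rw [intervalIntegral.integral_sub hintyy hintcy,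
          intervalIntegral.integral_const_mul, hFTCy]
      have h3 : IM d Δ x s t i j
          = (∫ u in s..t, x u i * deriv (fun v => x v j) u)
            - ∫ u in s..t, y u i * deriv (fun v => x v j) u := by
        rw [IM]
        simp only [hΔ, PiLp.sub_apply, sub_mul]
        rw [intervalIntegral.integral_sub hintxx hintyx]
      have h4 : IM d y Δ s t i j
          = (∫ u in s..t, y u i * deriv (fun v => x v j) u)
            - ∫ u in s..t, y u i * deriv (fun v => y v j) u := by
        rw [IM]
        simp only [hderΔ j, mul_sub]
        rw [intervalIntegral.integral_sub hintyx hintyy]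
      rw [h1, h2, h3, h4]
      simp only [hΔ, PiLp.sub_apply]
      ring
    have hiden : toE2 d (fun i j => levelTwo d x s t i j - levelTwo d y s t i j)
        = (toE2 d (IM d Δ x s t) - outer2 d (Δ s) (x t - x s))
          + (toE2 d (IM d y Δ s t) - outer2 d (y s) (Δ t - Δ s)) := by
      ext q
      obtain ⟨i, j⟩ := q
      simp only [toE2, outer2, PiLp.add_apply, PiLp.sub_apply, PiLp.toLp_apply]
      have := key i j
      simp only [PiLp.sub_apply] at this
      exact this
    have hreal : frobNorm d (fun i j => levelTwo d x s t i j - levelTwo d y s t i j)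
        ≤ 2 * C0 * ℓ * K := by
      rw [frobNorm_eq_norm, hiden]
      calc ‖(toE2 d (IM d Δ x s t) - outer2 d (Δ s) (x t - x s))
            + (toE2 d (IM d y Δ s t) - outer2 d (y s) (Δ t - Δ s))‖
          ≤ ‖toE2 d (IM d Δ x s t) - outer2 d (Δ s) (x t - x s)‖
            + ‖toE2 d (IM d y Δ s t) - outer2 d (y s) (Δ t - Δ s)‖ := norm_add_le _ _
        _ ≤ C0 * (K * ℓ) + C0 * (ℓ * K) := add_le_add hY1 hY2
        _ = 2 * C0 * ℓ * K := by ring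
    calc ENNReal.ofReal (frobNorm d (fun i j => levelTwo d x s t i j - levelTwo d y s t i j))
        ≤ ENNReal.ofReal (2 * C0 * ℓ * K) := ENNReal.ofReal_le_ofReal hreal
      _ = ENNReal.ofReal (2 * C0 * ℓ) * ENNReal.ofReal K := by
          rw [← ENNReal.ofReal_mul (by positivity)]
      _ = ENNReal.ofReal (2 * C0 * ℓ) * oneVar p Δ s t := by
          rw [hK, ENNReal.ofReal_toReal hVtop]
end

section
/- Let α : ℝ^d → M_n(ℝ) be a linear map, and let x, y : [0,1] → ℝ^d be continuously differentiable paths with x(1) = y(0). Suppose F, G : [0,1] → M_n(ℝ) are differentiable with F(0) = G(0) = 1, F′(t) = F(t)·α(x′(t)) and G′(t) = G(t)·α(y′(t)) for all t ∈ [0,1]. Suppose K : [0,1] → M_n(ℝ) is continuous with K(0) = 1, differentiable at every t ≠ 1/2, and satisfies K′(t) = 2·K(t)·α(x′(2t)) for t ∈ [0,1/2) and K′(t) = 2·K(t)·α(y′(2t−1)) for t ∈ (1/2,1] (this is the path-development equation driven by the concatenation x ⋆ y). Then K(1) = F(1)·G(1). -/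
open scoped Matrix

open Set Filter Topology
open scoped NNReal

attribute [local instance] Matrix.normedAddCommGroup Matrix.normedSpace

theorem pdc_norm_mul_le {n : ℕ} (M N : Matrix (Fin n) (Fin n) ℝ) :
    ‖M * N‖ ≤ n * ‖M‖ * ‖N‖ := by
  refine (Matrix.norm_le_iff (by positivity)).2 fun i j => ?_
  calc ‖(M * N) i j‖ = ‖∑ k, M i k * N k j‖ := by rw [Matrix.mul_apply]
    _ ≤ ∑ k, ‖M i k * N k j‖ := norm_sum_le _ _
    _ ≤ ∑ _k : Fin n, ‖M‖ * ‖N‖ := Finset.sum_le_sum fun k _ => by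
        rw [norm_mul]
        exact mul_le_mul (Matrix.norm_entry_le_entrywise_sup_norm M)
          (Matrix.norm_entry_le_entrywise_sup_norm N) (norm_nonneg _) (norm_nonneg _)
    _ = n * ‖M‖ * ‖N‖ := by
        rw [Finset.sum_const, Finset.card_univ, Fintype.card_fin, nsmul_eq_mul, mul_assoc]

theorem pdc_lipschitz {n : ℕ} (A : Matrix (Fin n) (Fin n) ℝ) {c : ℝ} (hc : 0 ≤ c)
    (hA : ‖A‖ ≤ c) :
    LipschitzWith (Real.toNNReal (2 * n * c))
      (fun M : Matrix (Fin n) (Fin n) ℝ => (2:ℝ) • (M * A)) := by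
  refine LipschitzWith.of_dist_le_mul fun M N => ?_
  rw [dist_eq_norm, dist_eq_norm]
  have h1 : (2:ℝ) • (M * A) - (2:ℝ) • (N * A) = (2:ℝ) • ((M - N) * A) := by
    rw [Matrix.sub_mul, smul_sub]
  rw [h1, norm_smul, Real.coe_toNNReal _ (by positivity)]
  have h2 := pdc_norm_mul_le (M - N) A
  have h3 : (n:ℝ) * ‖M - N‖ * ‖A‖ ≤ n * ‖M - N‖ * c :=
    mul_le_mul_of_nonneg_left hA (by positivity)
  have h4 : ‖(2:ℝ)‖ = 2 := by norm_num
  rw [h4]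
  nlinarith [norm_nonneg (M - N)]


/-- Path development is multiplicative under concatenation: if `F`, `G`
are the path developments of `C¹` paths `x`, `y` (with `x(1) = y(0)`) with respect to a
linear connection `α`, and `K` solves the development equation driven by the concatenation
`x ⋆ y` (at double speed on each half, differentiable away from `t = 1/2`), then
`K(1) = F(1)·G(1)`. -/
theorem path_development_concatenation
    (d n : ℕ) (α : EuclideanSpace ℝ (Fin d) →ₗ[ℝ] Matrix (Fin n) (Fin n) ℝ)
    (x y : ℝ → EuclideanSpace ℝ (Fin d))
    (hx : ContDiff ℝ 1 x) (hy : ContDiff ℝ 1 y) (hxy : x 1 = y 0)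
    (F G K : ℝ → Matrix (Fin n) (Fin n) ℝ)
    (hF0 : F 0 = 1) (hG0 : G 0 = 1) (hK0 : K 0 = 1)
    (hF : ∀ t ∈ Set.Icc (0:ℝ) 1, ∀ i j,
      HasDerivWithinAt (fun u => F u i j) ((F t * α (deriv x t)) i j) (Set.Icc (0:ℝ) 1) t)
    (hG : ∀ t ∈ Set.Icc (0:ℝ) 1, ∀ i j,
      HasDerivWithinAt (fun u => G u i j) ((G t * α (deriv y t)) i j) (Set.Icc (0:ℝ) 1) t)
    (hKcont : ContinuousOn K (Set.Icc (0:ℝ) 1))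
    (hK₁ : ∀ t ∈ Set.Ico (0:ℝ) (1/2), ∀ i j,
      HasDerivWithinAt (fun u => K u i j) (((2:ℝ) • (K t * α (deriv x (2*t)))) i j)
        (Set.Icc (0:ℝ) 1) t)
    (hK₂ : ∀ t ∈ Set.Ioc (1/2:ℝ) 1, ∀ i j,
      HasDerivWithinAt (fun u => K u i j) (((2:ℝ) • (K t * α (deriv y (2*t-1)))) i j)
        (Set.Icc (0:ℝ) 1) t) :
    K 1 = F 1 * G 1 := by
  have hdx : Continuous (deriv x) := hx.continuous_deriv le_rfl
  have hdy : Continuous (deriv y) := hy.continuous_deriv le_rfl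
  have hαc : Continuous α := α.continuous_of_finiteDimensional
  obtain ⟨C1, hC1⟩ := (isCompact_Icc : IsCompact (Icc (0:ℝ) 1)).exists_bound_of_continuousOn
    (hαc.comp hdx).continuousOn
  obtain ⟨C2, hC2⟩ := (isCompact_Icc : IsCompact (Icc (0:ℝ) 1)).exists_bound_of_continuousOn
    (hαc.comp hdy).continuousOn
  set C : ℝ := max (max C1 C2) 0 with hCdef
  have hC0 : 0 ≤ C := le_max_right _ _
  have hCx : ∀ s ∈ Icc (0:ℝ) 1, ‖α (deriv x s)‖ ≤ C := fun s hs =>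
    (hC1 s hs).trans (le_max_of_le_left (le_max_left _ _))
  have hCy : ∀ s ∈ Icc (0:ℝ) 1, ‖α (deriv y s)‖ ≤ C := fun s hs =>
    (hC2 s hs).trans (le_max_of_le_left (le_max_right _ _))
  set L : ℝ≥0 := Real.toNNReal (2 * n * C) with hLdef
  -- bundle entrywise derivatives into matrix-valued ones
  have bundle : ∀ (H : ℝ → Matrix (Fin n) (Fin n) ℝ) (D : Matrix (Fin n) (Fin n) ℝ)
      (s : Set ℝ) (t : ℝ),
      (∀ i j, HasDerivWithinAt (fun u => H u i j) (D i j) s t) → HasDerivWithinAt H D s t :=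
    fun H D s t h => hasDerivWithinAt_pi.2 fun i => hasDerivWithinAt_pi.2 fun j => h i j
  have hFm : ∀ t ∈ Icc (0:ℝ) 1,
      HasDerivWithinAt F (F t * α (deriv x t)) (Icc (0:ℝ) 1) t :=
    fun t ht => bundle _ _ _ _ (hF t ht)
  have hGm : ∀ t ∈ Icc (0:ℝ) 1,
      HasDerivWithinAt G (G t * α (deriv y t)) (Icc (0:ℝ) 1) t :=
    fun t ht => bundle _ _ _ _ (hG t ht)
  have hK1m : ∀ t ∈ Ico (0:ℝ) (1/2),
      HasDerivWithinAt K ((2:ℝ) • (K t * α (deriv x (2*t)))) (Icc (0:ℝ) 1) t :=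
    fun t ht => bundle _ _ _ _ (hK₁ t ht)
  have hK2m : ∀ t ∈ Ioc (1/2:ℝ) 1,
      HasDerivWithinAt K ((2:ℝ) • (K t * α (deriv y (2*t-1)))) (Icc (0:ℝ) 1) t :=
    fun t ht => bundle _ _ _ _ (hK₂ t ht)
  have hFc : ContinuousOn F (Icc (0:ℝ) 1) := fun t ht => (hFm t ht).continuousWithinAt
  have hGc : ContinuousOn G (Icc (0:ℝ) 1) := fun t ht => (hGm t ht).continuousWithinAt
  -- first half
  have maps1 : ∀ t ∈ Icc (0:ℝ) (1/2), 2*t ∈ Icc (0:ℝ) 1 := fun t ht =>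
    ⟨by linarith [ht.1], by linarith [ht.2]⟩
  have h2d : ∀ t : ℝ, HasDerivAt (fun u : ℝ => 2*u) 2 t := fun t => by
    simpa using (hasDerivAt_id t).const_mul (2:ℝ)
  have hg1d : ∀ t ∈ Icc (0:ℝ) (1/2),
      HasDerivWithinAt (fun u => F (2*u)) ((2:ℝ) • (F (2*t) * α (deriv x (2*t))))
        (Icc (0:ℝ) (1/2)) t := by
    intro t ht
    exact (hFm (2*t) (maps1 t ht)).scomp t ((h2d t).hasDerivWithinAt) (fun u hu => maps1 u hu)
  have hg1c : ContinuousOn (fun u => F (2*u)) (Icc (0:ℝ) (1/2)) :=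
    fun t ht => (hg1d t ht).continuousWithinAt
  set v1 : ℝ → Matrix (Fin n) (Fin n) ℝ → Matrix (Fin n) (Fin n) ℝ :=
    fun t M => (2:ℝ) • (M * α (deriv x (2 * (max 0 (min t (1/2)))))) with hv1def
  have hv1 : ∀ t, LipschitzWith L (v1 t) := by
    intro t
    refine pdc_lipschitz _ hC0 (hCx _ ?_)
    have h0 : (0:ℝ) ≤ max 0 (min t (1/2)) := le_max_left _ _
    have h1 : max 0 (min t (1/2)) ≤ 1/2 := max_le (by norm_num) (min_le_right _ _)
    exact ⟨by linarith, by linarith⟩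
  have hclamp1 : ∀ t ∈ Ico (0:ℝ) (1/2), max 0 (min t (1/2)) = t := fun t ht => by
    rw [min_eq_left ht.2.le, max_eq_right ht.1]
  have heq1 : EqOn K (fun u => F (2*u)) (Icc (0:ℝ) (1/2)) := by
    refine ODE_solution_unique_of_mem_Icc_right (v := v1) (s := fun _ => univ)
      (fun t _ => (hv1 t).lipschitzOnWith)
      (hKcont.mono (Icc_subset_Icc_right (by norm_num))) ?_ (fun t _ => mem_univ _)
      hg1c ?_ (fun t _ => mem_univ _) ?_
    · intro t ht
      have h := (hK1m t ht).mono_of_mem_nhdsWithin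
        (Icc_mem_nhdsGE_of_mem ⟨ht.1, lt_of_lt_of_le ht.2 (by norm_num)⟩)
      simp only [hv1def]
      rw [hclamp1 t ht]
      exact h
    · intro t ht
      have h := (hg1d t (Ico_subset_Icc_self ht)).mono_of_mem_nhdsWithin (Icc_mem_nhdsGE_of_mem ht)
      simp only [hv1def]
      rw [hclamp1 t ht]
      exact h
    · show K 0 = F (2*0)
      rw [hK0, mul_zero, hF0]
  have hK12 : K (1/2) = F 1 := by
    have h := heq1 ⟨by norm_num, le_refl _⟩
    norm_num at h
    exact h
  -- second half
  set Lc : Matrix (Fin n) (Fin n) ℝ →L[ℝ] Matrix (Fin n) (Fin n) ℝ :=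
    LinearMap.toContinuousLinearMap (LinearMap.mulLeft ℝ (F 1)) with hLcdef
  set g2 : ℝ → Matrix (Fin n) (Fin n) ℝ := fun t => F 1 * G (2*t - 1) with hg2def
  have maps2 : ∀ t ∈ Icc (1/2:ℝ) 1, 2*t - 1 ∈ Icc (0:ℝ) 1 := fun t ht =>
    ⟨by linarith [ht.1], by linarith [ht.2]⟩
  have haffd : ∀ t : ℝ, HasDerivAt (fun u : ℝ => 2*u - 1) 2 t := fun t => by
    simpa using ((hasDerivAt_id t).const_mul (2:ℝ)).sub_const 1
  have hg2d : ∀ t ∈ Icc (1/2:ℝ) 1,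
      HasDerivWithinAt g2 ((2:ℝ) • (g2 t * α (deriv y (2*t-1)))) (Icc (1/2:ℝ) 1) t := by
    intro t ht
    have h1 : HasDerivWithinAt (fun u => G (2*u - 1))
        ((2:ℝ) • (G (2*t-1) * α (deriv y (2*t-1)))) (Icc (1/2:ℝ) 1) t :=
      (hGm _ (maps2 t ht)).scomp t ((haffd t).hasDerivWithinAt) (fun u hu => maps2 u hu)
    have h2 := Lc.hasFDerivAt.comp_hasDerivWithinAt t h1
    have h3 : Lc ((2:ℝ) • (G (2*t-1) * α (deriv y (2*t-1))))
        = (2:ℝ) • (g2 t * α (deriv y (2*t-1))) := by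
      rw [map_smul]
      congr 1
      simp [hLcdef, hg2def, LinearMap.mulLeft_apply, mul_assoc]
    rw [← h3]
    exact h2
  have hg2c : ContinuousOn g2 (Icc (1/2:ℝ) 1) := fun t ht => (hg2d t ht).continuousWithinAt
  set v2 : ℝ → Matrix (Fin n) (Fin n) ℝ → Matrix (Fin n) (Fin n) ℝ :=
    fun t M => (2:ℝ) • (M * α (deriv y (2 * (max (1/2) (min t 1)) - 1))) with hv2def
  have hv2 : ∀ t, LipschitzWith L (v2 t) := by
    intro t
    refine pdc_lipschitz _ hC0 (hCy _ ?_)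
    have h0 : (1/2:ℝ) ≤ max (1/2) (min t 1) := le_max_left _ _
    have h1 : max (1/2:ℝ) (min t 1) ≤ 1 := max_le (by norm_num) (min_le_right _ _)
    exact ⟨by linarith, by linarith⟩
  have hclamp2 : ∀ t ∈ Icc (1/2:ℝ) 1, max (1/2:ℝ) (min t 1) = t := fun t ht => by
    rw [min_eq_left ht.2, max_eq_right ht.1]
  have key : ∀ c ∈ Ioo (1/2:ℝ) 1,
      dist (K 1) (g2 1) ≤ dist (K c) (g2 c) * Real.exp (L * 1) := by
    intro c hc
    have hsub : Icc c 1 ⊆ Icc (1/2:ℝ) 1 := Icc_subset_Icc hc.1.le le_rfl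
    have hb := dist_le_of_trajectories_ODE hv2
      (hKcont.mono (Icc_subset_Icc (by linarith [hc.1]) le_rfl))
      (f := K) (g := g2) (a := c) (b := 1)
      ?_ (hg2c.mono hsub) ?_ (le_refl (dist (K c) (g2 c))) 1 ⟨hc.2.le, le_rfl⟩
    · refine hb.trans (mul_le_mul_of_nonneg_left (Real.exp_le_exp.2 ?_) dist_nonneg)
      have : (1:ℝ) - c ≤ 1 := by linarith [hc.1]
      exact mul_le_mul_of_nonneg_left this L.coe_nonneg
    · intro t ht
      have htI : t ∈ Ioc (1/2:ℝ) 1 := ⟨lt_of_lt_of_le hc.1 ht.1, ht.2.le⟩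
      have h := (hK2m t htI).mono_of_mem_nhdsWithin
        (Icc_mem_nhdsGE_of_mem ⟨by linarith [htI.1], ht.2⟩)
      simp only [hv2def]
      rw [hclamp2 t ⟨htI.1.le, htI.2⟩]
      exact h
    · intro t ht
      have htI : t ∈ Icc (1/2:ℝ) 1 := ⟨hc.1.le.trans ht.1, ht.2.le⟩
      have h := (hg2d t htI).mono_of_mem_nhdsWithin (Icc_mem_nhdsGE_of_mem ⟨htI.1, ht.2⟩)
      simp only [hv2def]
      rw [hclamp2 t htI]
      exact h
  have hKt : Tendsto K (𝓝[>] (1/2:ℝ)) (𝓝 (K (1/2))) := by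
    have h0 := hKcont.continuousWithinAt (⟨by norm_num, by norm_num⟩ : (1/2:ℝ) ∈ Icc (0:ℝ) 1)
    have h1 := h0.mono_left (nhdsWithin_mono _
      (fun u hu => ⟨by linarith [hu.1], hu.2.le⟩ : Ioo (1/2:ℝ) 1 ⊆ Icc (0:ℝ) 1))
    rwa [nhdsWithin_Ioo_eq_nhdsGT (by norm_num : (1/2:ℝ) < 1)] at h1
  have hg2t : Tendsto g2 (𝓝[>] (1/2:ℝ)) (𝓝 (g2 (1/2))) := by
    have h0 := hg2c.continuousWithinAt (⟨le_refl _, by norm_num⟩ : (1/2:ℝ) ∈ Icc (1/2:ℝ) 1)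
    have h1 := h0.mono_left (nhdsWithin_mono _
      (fun u hu => ⟨hu.1.le, hu.2.le⟩ : Ioo (1/2:ℝ) 1 ⊆ Icc (1/2:ℝ) 1))
    rwa [nhdsWithin_Ioo_eq_nhdsGT (by norm_num : (1/2:ℝ) < 1)] at h1
  have hzero : dist (K (1/2:ℝ)) (g2 (1/2)) = 0 := by
    have hg2half : g2 (1/2:ℝ) = F 1 := by
      rw [hg2def]
      norm_num [hG0]
    rw [hK12, hg2half, dist_self]
  have hfinal : dist (K 1) (g2 1) ≤ 0 := by
    have hT : Tendsto (fun c => dist (K c) (g2 c) * Real.exp ((L:ℝ) * 1)) (𝓝[>] (1/2:ℝ)) (𝓝 0) := by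
      have := (hKt.dist hg2t).mul_const (Real.exp ((L:ℝ) * 1))
      rwa [hzero, zero_mul] at this
    refine ge_of_tendsto hT ?_
    filter_upwards [Ioo_mem_nhdsGT (by norm_num : (1/2:ℝ) < 1)] with c hc
    exact key c hc
  have hK1g : K 1 = g2 1 := by rwa [dist_le_zero] at hfinal
  rw [hK1g, hg2def]
  norm_num
end

section
/- Let 1 ≤ p < q < ∞ and let X : [0,1]² → ℝ^d be continuous with finite controlled p-variation |X|_{p;[0,1]²} < ∞. Then for every ε > 0 there exists δ > 0 such that for every rectangle partition π of [0,1]² in which every rectangle has minimum side length at most δ, one has ∑_{r∈π} ‖□_r[X]‖^q ≤ ε. -/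
open scoped ENNReal

/-- A closed axis-parallel rectangle `[s,s']×[t,t']` in the plane. -/
structure Rect where
  s : ℝ
  s' : ℝ
  t : ℝ
  t' : ℝ

/-- The subset of the plane determined by a rectangle. -/
def Rect.toSet (r : Rect) : Set (ℝ × ℝ) := Set.Icc r.s r.s' ×ˢ Set.Icc r.t r.t'

/-- The unit square `[0,1]²`. -/
def unitRect : Rect := ⟨0, 1, 0, 1⟩

/-- The 2D increment `□_R[X] := X(s,t) − X(s',t) − X(s,t') + X(s',t')` of `X` over the
rectangle `R = [s,s']×[t,t']`. -/
def boxInc {E : Type*} [NormedAddCommGroup E] (X : ℝ → ℝ → E) (r : Rect) : E :=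
  X r.s r.t - X r.s' r.t - X r.s r.t' + X r.s' r.t'

/-- `π : Fin K → Rect` is a rectangle partition of `R`: a finite collection of closed
subrectangles with pairwise disjoint interiors whose union is `R`. -/
def IsRectPartition (R : Rect) {K : ℕ} (π : Fin K → Rect) : Prop :=
  (∀ i, (π i).s ≤ (π i).s' ∧ (π i).t ≤ (π i).t') ∧
  (∀ i j, i ≠ j → interior (π i).toSet ∩ interior (π j).toSet = ∅) ∧
  (⋃ i, (π i).toSet) = R.toSet

/-- The `p`-th power of the controlled 2D `p`-variation of `X` over the rectangle `R`:
the supremum over all rectangle partitions `π` of `R` of `∑_{r ∈ π} ‖□_r[X]‖^p`. -/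
noncomputable def cVarPow {E : Type*} [NormedAddCommGroup E]
    (p : ℝ) (X : ℝ → ℝ → E) (R : Rect) : ℝ≥0∞ :=
  ⨆ (K : ℕ) (π : Fin K → Rect) (_ : IsRectPartition R π),
    ∑ i, (‖boxInc X (π i)‖₊ : ℝ≥0∞) ^ p

/-- The controlled 2D `p`-variation `|X|_{p;R}`, i.e. the `1/p`-th power of `cVarPow`. -/
noncomputable def cVar {E : Type*} [NormedAddCommGroup E]
    (p : ℝ) (X : ℝ → ℝ → E) (R : Rect) : ℝ≥0∞ :=
  cVarPow p X R ^ (1 / p)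

/-- The `p`-th power of the grid 2D `p`-variation of `X` over the rectangle `R`:
the supremum over all grid-like partitions of `∑_{i,j} ‖□_{[σᵢ,σᵢ₊₁]×[τⱼ,τⱼ₊₁]}[X]‖^p`. -/
noncomputable def gridVarPow {E : Type*} [NormedAddCommGroup E]
    (p : ℝ) (X : ℝ → ℝ → E) (R : Rect) : ℝ≥0∞ :=
  ⨆ (n : ℕ) (m : ℕ) (σ : Fin (n + 1) → ℝ) (τ : Fin (m + 1) → ℝ)
    (_ : Monotone σ) (_ : Monotone τ)
    (_ : σ 0 = R.s) (_ : σ (Fin.last n) = R.s')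
    (_ : τ 0 = R.t) (_ : τ (Fin.last m) = R.t'),
    ∑ i : Fin n, ∑ j : Fin m,
      (‖boxInc X ⟨σ i.castSucc, σ i.succ, τ j.castSucc, τ j.succ⟩‖₊ : ℝ≥0∞) ^ p

/-- The grid 2D `p`-variation `V_p(X;R)`, i.e. the `1/p`-th power of `gridVarPow`. -/
noncomputable def gridVar {E : Type*} [NormedAddCommGroup E]
    (p : ℝ) (X : ℝ → ℝ → E) (R : Rect) : ℝ≥0∞ :=
  gridVarPow p X R ^ (1 / p)

/-- The supremum norm `sup_{[0,1]²} ‖X‖`, valued in `ℝ≥0∞`. -/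
noncomputable def supNormSq {E : Type*} [NormedAddCommGroup E] (X : ℝ → ℝ → E) : ℝ≥0∞ :=
  ⨆ (s ∈ Set.Icc (0:ℝ) 1) (t ∈ Set.Icc (0:ℝ) 1), (‖X s t‖₊ : ℝ≥0∞)

/-- The controlled `p`-variation norm
`‖X‖_{p-cvar} := sup ‖X‖ + |X(·,0)|_p + |X(0,·)|_p + |X|_{p;[0,1]²}`. -/
noncomputable def cvarNorm {E : Type*} [NormedAddCommGroup E]
    (p : ℝ) (X : ℝ → ℝ → E) : ℝ≥0∞ :=
  supNormSq X + oneVar p (fun s => X s 0) 0 1 + oneVar p (fun t => X 0 t) 0 1 +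
    cVar p X unitRect

/-- The `p`-variation norm
`‖X‖_{p-var} := sup ‖X‖ + |X(·,0)|_p + |X(0,·)|_p + V_p(X;[0,1]²)`. -/
noncomputable def varNorm {E : Type*} [NormedAddCommGroup E]
    (p : ℝ) (X : ℝ → ℝ → E) : ℝ≥0∞ :=
  supNormSq X + oneVar p (fun s => X s 0) 0 1 + oneVar p (fun t => X 0 t) 0 1 +
    gridVar p X unitRect

/-- If `1 ≤ p < q` and `X : [0,1]² → ℝ^d` is continuous with finite
controlled `p`-variation, then for every `ε > 0` there is `δ > 0` such that every rectangle
partition of `[0,1]²` all of whose rectangles have minimum side length at most `δ` has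
`q`-power increment sum at most `ε`. -/
theorem small_mesh_q_variation_small
    (d : ℕ) (p q : ℝ) (hp : 1 ≤ p) (hpq : p < q)
    (X : ℝ → ℝ → EuclideanSpace ℝ (Fin d))
    (hcont : ContinuousOn (fun z : ℝ × ℝ => X z.1 z.2) (Set.Icc 0 1 ×ˢ Set.Icc 0 1))
    (hfin : cVarPow p X unitRect ≠ ⊤) :
    ∀ ε : ℝ, 0 < ε → ∃ δ : ℝ, 0 < δ ∧
      ∀ (K : ℕ) (π : Fin K → Rect), IsRectPartition unitRect π →
        (∀ i, min ((π i).s' - (π i).s) ((π i).t' - (π i).t) ≤ δ) →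
        ∑ i, (‖boxInc X (π i)‖₊ : ℝ≥0∞) ^ q ≤ ENNReal.ofReal ε := by
  intro ε hε
  set C := cVarPow p X unitRect with hC
  set M := C.toReal with hM
  have hM0 : 0 ≤ M := ENNReal.toReal_nonneg
  have hqp : 0 < q - p := by linarith
  have hdivpos : 0 < ε / (M + 1) := by positivity
  set b : ℝ := (ε / (M + 1)) ^ (q - p)⁻¹ with hb
  have hbpos : 0 < b := Real.rpow_pos_of_pos hdivpos _
  have hcomp : IsCompact (Set.Icc (0:ℝ) 1 ×ˢ Set.Icc (0:ℝ) 1) :=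
    isCompact_Icc.prod isCompact_Icc
  have huc := hcomp.uniformContinuousOn_of_continuous hcont
  rw [Metric.uniformContinuousOn_iff_le] at huc
  obtain ⟨δ, hδ, hδ'⟩ := huc (b / 2) (by linarith)
  refine ⟨δ, hδ, ?_⟩
  intro K π hπ hmesh
  have hsub : ∀ i, (π i).toSet ⊆ Set.Icc (0:ℝ) 1 ×ˢ Set.Icc (0:ℝ) 1 := by
    intro i
    have h2 := hπ.2.2
    rw [show unitRect.toSet = Set.Icc (0:ℝ) 1 ×ˢ Set.Icc (0:ℝ) 1 from rfl] at h2
    rw [← h2]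
    exact Set.subset_iUnion (fun j => (π j).toSet) i
  have hbox : ∀ i, (‖boxInc X (π i)‖₊ : ℝ≥0∞) ≤ ENNReal.ofReal b := by
    intro i
    have hs : (π i).s ≤ (π i).s' := (hπ.1 i).1
    have ht : (π i).t ≤ (π i).t' := (hπ.1 i).2
    have hmem : ∀ u v, u ∈ Set.Icc (π i).s (π i).s' → v ∈ Set.Icc (π i).t (π i).t' →
        ((u, v) : ℝ × ℝ) ∈ Set.Icc (0:ℝ) 1 ×ˢ Set.Icc (0:ℝ) 1 := by
      intro u v hu hv
      exact hsub i (Set.mk_mem_prod hu hv)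
    have hnorm : ‖boxInc X (π i)‖ ≤ b := by
      rcases min_le_iff.mp (hmesh i) with hcase | hcase
      · have h1 : dist (X (π i).s (π i).t) (X (π i).s' (π i).t) ≤ b / 2 := by
          refine hδ' ((π i).s, (π i).t)
            (hmem _ _ (Set.left_mem_Icc.2 hs) (Set.left_mem_Icc.2 ht))
            ((π i).s', (π i).t)
            (hmem _ _ (Set.right_mem_Icc.2 hs) (Set.left_mem_Icc.2 ht)) ?_
          rw [Prod.dist_eq]
          refine max_le ?_ (by simp [hδ.le])
          rw [Real.dist_eq, abs_of_nonpos (by linarith)]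
          linarith
        have h2 : dist (X (π i).s (π i).t') (X (π i).s' (π i).t') ≤ b / 2 := by
          refine hδ' ((π i).s, (π i).t')
            (hmem _ _ (Set.left_mem_Icc.2 hs) (Set.right_mem_Icc.2 ht))
            ((π i).s', (π i).t')
            (hmem _ _ (Set.right_mem_Icc.2 hs) (Set.right_mem_Icc.2 ht)) ?_
          rw [Prod.dist_eq]
          refine max_le ?_ (by simp [hδ.le])
          rw [Real.dist_eq, abs_of_nonpos (by linarith)]
          linarith
        have heq : boxInc X (π i) =
            (X (π i).s (π i).t - X (π i).s' (π i).t) -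
              (X (π i).s (π i).t' - X (π i).s' (π i).t') := by
          simp only [boxInc]; abel
        rw [heq]
        calc ‖_ - _‖ ≤ ‖X (π i).s (π i).t - X (π i).s' (π i).t‖ +
              ‖X (π i).s (π i).t' - X (π i).s' (π i).t'‖ := norm_sub_le _ _
          _ ≤ b / 2 + b / 2 := by
              rw [← dist_eq_norm, ← dist_eq_norm]; exact add_le_add h1 h2
          _ = b := by ring
      · have h1 : dist (X (π i).s (π i).t) (X (π i).s (π i).t') ≤ b / 2 := by
          refine hδ' ((π i).s, (π i).t)
            (hmem _ _ (Set.left_mem_Icc.2 hs) (Set.left_mem_Icc.2 ht))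
            ((π i).s, (π i).t')
            (hmem _ _ (Set.left_mem_Icc.2 hs) (Set.right_mem_Icc.2 ht)) ?_
          rw [Prod.dist_eq]
          refine max_le (by simp [hδ.le]) ?_
          rw [Real.dist_eq, abs_of_nonpos (by linarith)]
          linarith
        have h2 : dist (X (π i).s' (π i).t) (X (π i).s' (π i).t') ≤ b / 2 := by
          refine hδ' ((π i).s', (π i).t)
            (hmem _ _ (Set.right_mem_Icc.2 hs) (Set.left_mem_Icc.2 ht))
            ((π i).s', (π i).t')
            (hmem _ _ (Set.right_mem_Icc.2 hs) (Set.right_mem_Icc.2 ht)) ?_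
          rw [Prod.dist_eq]
          refine max_le (by simp [hδ.le]) ?_
          rw [Real.dist_eq, abs_of_nonpos (by linarith)]
          linarith
        have heq : boxInc X (π i) =
            (X (π i).s (π i).t - X (π i).s (π i).t') -
              (X (π i).s' (π i).t - X (π i).s' (π i).t') := by
          simp only [boxInc]; abel
        rw [heq]
        calc ‖_ - _‖ ≤ ‖X (π i).s (π i).t - X (π i).s (π i).t'‖ +
              ‖X (π i).s' (π i).t - X (π i).s' (π i).t'‖ := norm_sub_le _ _
          _ ≤ b / 2 + b / 2 := by
              rw [← dist_eq_norm, ← dist_eq_norm]; exact add_le_add h1 h2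
          _ = b := by ring
    rw [← ENNReal.ofReal_coe_nnreal, coe_nnnorm]
    exact ENNReal.ofReal_le_ofReal hnorm
  have hsum_p : ∑ i, (‖boxInc X (π i)‖₊ : ℝ≥0∞) ^ p ≤ C := by
    rw [hC, cVarPow]
    exact le_iSup_of_le K (le_iSup_of_le π (le_iSup_of_le hπ le_rfl))
  have key : ∀ i : Fin K, (‖boxInc X (π i)‖₊ : ℝ≥0∞) ^ q ≤
      ENNReal.ofReal b ^ (q - p) * (‖boxInc X (π i)‖₊ : ℝ≥0∞) ^ p := by
    intro i
    set x : ℝ≥0∞ := (‖boxInc X (π i)‖₊ : ℝ≥0∞) with hx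
    by_cases hx0 : x = 0
    · rw [hx0, ENNReal.zero_rpow_of_pos (by linarith : (0:ℝ) < q)]
      exact zero_le
    · have hxt : x ≠ ⊤ := ENNReal.coe_ne_top
      have : x ^ q = x ^ (q - p) * x ^ p := by
        rw [← ENNReal.rpow_add _ _ hx0 hxt]; ring_nf
      rw [this]
      exact mul_le_mul_left (ENNReal.rpow_le_rpow (hbox i) hqp.le) _
  have hbqp : ENNReal.ofReal b ^ (q - p) = ENNReal.ofReal (ε / (M + 1)) := by
    rw [ENNReal.ofReal_rpow_of_pos hbpos, hb,
      ← Real.rpow_mul hdivpos.le, inv_mul_cancel₀ hqp.ne', Real.rpow_one]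
  calc ∑ i, (‖boxInc X (π i)‖₊ : ℝ≥0∞) ^ q
      ≤ ∑ i, ENNReal.ofReal b ^ (q - p) * (‖boxInc X (π i)‖₊ : ℝ≥0∞) ^ p :=
        Finset.sum_le_sum fun i _ => key i
    _ = ENNReal.ofReal b ^ (q - p) * ∑ i, (‖boxInc X (π i)‖₊ : ℝ≥0∞) ^ p :=
        (Finset.mul_sum _ _ _).symm
    _ ≤ ENNReal.ofReal b ^ (q - p) * C := mul_le_mul_right hsum_p _
    _ = ENNReal.ofReal (ε / (M + 1)) * ENNReal.ofReal M := by
        rw [hbqp, hM, ENNReal.ofReal_toReal hfin]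
    _ = ENNReal.ofReal (ε / (M + 1) * M) := (ENNReal.ofReal_mul hdivpos.le).symm
    _ ≤ ENNReal.ofReal ε := by
        apply ENNReal.ofReal_le_ofReal
        rw [div_mul_eq_mul_div, div_le_iff₀ (by positivity : (0:ℝ) < M + 1)]
        nlinarith
end
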